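/- Let n be odd, μ̄ : Rⁿ → Rⁿ as defined by μ̄(c₀,…,c_{n-1}) = ((1-2u²)^i c_i)_i, Φ : Rⁿ → F_p^{2n} the Gray map, and π : F_p^{2n} → F_p^{2n} the Nechaev permutation induced by τ = (1, n+1)(3, n+3)⋯(n-2, 2n-2) on indices {0,…,2n-1}. Then Φ ∘ μ̄ = π ∘ Φ. -/

import Mathlib

open Polynomial

abbrev Rp (p : ℕ) := AdjoinRoot (X ^ 3 - X : (ZMod p)[X])
noncomputable def uu (p : ℕ) : Rp p := AdjoinRoot.root _
noncomputable def lam (p : ℕ) : Rp p := 1 - 2 * uu p ^ 2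
noncomputable def am (p : ℕ) : ZMod p →+* Rp p := algebraMap (ZMod p) (Rp p)

noncomputable def enc (p n : ℕ) (a b c : Fin n → ZMod p) : Fin n → Rp p :=
  fun i => am p (a i) + am p (b i) * uu p + am p (c i) * uu p ^ 2

def grayOut (p n : ℕ) (a c : Fin n → ZMod p) : Fin (2 * n) → ZMod p :=
  fun j =>
    if h : (j : ℕ) < n then - c ⟨j, h⟩
    else 2 * a ⟨(j : ℕ) - n, by have := j.isLt; omega⟩ +
      c ⟨(j : ℕ) - n, by have := j.isLt; omega⟩

/-- The permutation `μ̄(c₀,…,c_{n-1}) = ((1-2u²)^i cᵢ)ᵢ` of `Rⁿ`. -/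
noncomputable def mubar (p n : ℕ) (r : Fin n → Rp p) : Fin n → Rp p :=
  fun i => lam p ^ (i : ℕ) * r i

/-- The permutation `τ = (1,n+1)(3,n+3)⋯(n-2,2n-2)` of `{0,…,2n-1}`. -/
def tau (n : ℕ) : Fin (2 * n) → Fin (2 * n) := fun j =>
  if h : (j : ℕ) < n ∧ (j : ℕ) % 2 = 1 then ⟨(j : ℕ) + n, by have := j.isLt; omega⟩
  else if h' : n ≤ (j : ℕ) ∧ ((j : ℕ) - n) % 2 = 1 then
    ⟨(j : ℕ) - n, by have := j.isLt; omega⟩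
  else j

/-- The Nechaev permutation of `F_p^{2n}`. -/
def nechaev (p n : ℕ) (x : Fin (2 * n) → ZMod p) : Fin (2 * n) → ZMod p :=
  fun j => x (tau n j)

lemma u_cube (p : ℕ) : uu p ^ 3 = uu p := by
  have h : AdjoinRoot.mk (X ^ 3 - X : (ZMod p)[X]) (X ^ 3 - X) = 0 := AdjoinRoot.mk_self
  rw [map_sub, map_pow, AdjoinRoot.mk_X, sub_eq_zero] at h
  exact h

lemma lam_sq (p : ℕ) : lam p ^ 2 = 1 := by
  unfold lam
  linear_combination (4 * uu p) * u_cube p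

lemma exists_abc (p : ℕ) [Fact p.Prime] (x : Rp p) :
    ∃ a b c : ZMod p, x = am p a + am p b * uu p + am p c * uu p ^ 2 := by
  obtain ⟨f, rfl⟩ := AdjoinRoot.mk_surjective x
  set g : (ZMod p)[X] := X ^ 3 - X with hgdef
  have hg : g.Monic := by
    apply (monic_X_pow 3).sub_of_left
    rw [degree_X_pow, degree_X]
    norm_num
  set r := f %ₘ g with hrdef
  have hmk : AdjoinRoot.mk g f = AdjoinRoot.mk g r := by
    conv_lhs => rw [← Polynomial.modByMonic_add_div f g]
    rw [map_add, map_mul, AdjoinRoot.mk_self, zero_mul, add_zero]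
  have hdeg : r.natDegree < 3 := by
    have h1 := Polynomial.degree_modByMonic_lt f hg
    have h2 : g.degree = 3 := by rw [hgdef]; compute_degree!
    rw [h2] at h1
    by_cases hr0 : r = 0
    · simp [hr0]
    · rw [Polynomial.natDegree_lt_iff_degree_lt hr0]
      exact_mod_cast h1
  refine ⟨r.coeff 0, r.coeff 1, r.coeff 2, ?_⟩
  have hr : r = C (r.coeff 0) + C (r.coeff 1) * X + C (r.coeff 2) * X ^ 2 := by
    conv_lhs => rw [r.as_sum_range' 3 hdeg]
    simp [Finset.sum_range_succ, ← Polynomial.C_mul_X_pow_eq_monomial]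
  rw [hmk, hr]
  simp [am, AdjoinRoot.algebraMap_eq, uu, map_add, map_mul, map_pow, AdjoinRoot.mk_X,
    AdjoinRoot.mk_C]
  rfl

lemma lam_pow (p k : ℕ) : lam p ^ k = if k % 2 = 1 then lam p else 1 := by
  conv_lhs => rw [← Nat.div_add_mod k 2]
  rw [pow_add, pow_mul, lam_sq, one_pow, one_mul]
  rcases Nat.mod_two_eq_zero_or_one k with h | h <;> simp [h]

lemma lam_mul (p : ℕ) (a b c : ZMod p) :
    lam p * (am p a + am p b * uu p + am p c * uu p ^ 2) =
      am p a + am p (-b) * uu p + am p (-(2 * a + c)) * uu p ^ 2 := by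
  simp only [map_neg, map_add, map_mul, map_ofNat]
  unfold lam
  linear_combination (-2 * am p b - 2 * am p c * uu p) * u_cube p

lemma grayOut_lt (p n : ℕ) (a c : Fin n → ZMod p) (j : Fin (2 * n)) (h : (j : ℕ) < n) :
    grayOut p n a c j = - c ⟨j, h⟩ := dif_pos h

lemma grayOut_ge (p n : ℕ) (a c : Fin n → ZMod p) (j : Fin (2 * n)) (h : ¬ (j : ℕ) < n) :
    grayOut p n a c j = 2 * a ⟨(j : ℕ) - n, by have := j.isLt; omega⟩ +
      c ⟨(j : ℕ) - n, by have := j.isLt; omega⟩ := dif_neg h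

theorem gray_mubar_nechaev (p n : ℕ) [Fact p.Prime] (hp : p ≠ 2) (hn : Odd n)
    (Φ : (Fin n → Rp p) → Fin (2 * n) → ZMod p)
    (hΦ : ∀ a b c : Fin n → ZMod p, Φ (enc p n a b c) = grayOut p n a c) :
    Φ ∘ mubar p n = nechaev p n ∘ Φ := by
  funext r
  choose a b c hr using fun i => exists_abc p (r i)
  have hren : r = enc p n a b c := funext hr
  set b' : Fin n → ZMod p := fun i => if (i : ℕ) % 2 = 1 then -(b i) else b i with hb'
  set c' : Fin n → ZMod p := fun i => if (i : ℕ) % 2 = 1 then -(2 * a i + c i) else c i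
    with hc'
  have hmu : mubar p n (enc p n a b c) = enc p n a b' c' := by
    funext i
    rcases Nat.mod_two_eq_zero_or_one (i : ℕ) with h | h
    · simp only [mubar, enc, hb', hc', lam_pow, h]
      norm_num
    · simp only [mubar, enc, hb', hc', lam_pow, if_pos h]
      exact lam_mul p (a i) (b i) (c i)
  simp only [Function.comp_apply, hren, hmu, hΦ]
  funext j
  simp only [nechaev]
  by_cases h1 : (j : ℕ) < n
  · by_cases h2 : (j : ℕ) % 2 = 1
    · have ht : tau n j = ⟨(j : ℕ) + n, by have := j.isLt; omega⟩ := by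
        unfold tau; exact dif_pos ⟨h1, h2⟩
      rw [grayOut_lt p n a c' j h1, ht, grayOut_ge p n a c _ (by show ¬ ((j:ℕ) + n < n); omega)]
      simp [hc', h2]
    · have ht : tau n j = j := by
        unfold tau; rw [dif_neg (by omega), dif_neg (by omega)]
      rw [ht, grayOut_lt p n a c' j h1, grayOut_lt p n a c j h1]
      simp [hc', h2]
  · by_cases h2 : ((j : ℕ) - n) % 2 = 1
    · have ht : tau n j = ⟨(j : ℕ) - n, by have := j.isLt; omega⟩ := by
        unfold tau; rw [dif_neg (by omega), dif_pos ⟨by omega, h2⟩]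
      rw [grayOut_ge p n a c' j h1, ht, grayOut_lt p n a c _ (by show (j:ℕ) - n < n; omega)]
      simp [hc', h2]
    · have ht : tau n j = j := by
        unfold tau; rw [dif_neg (by omega), dif_neg (by omega)]
      rw [ht, grayOut_ge p n a c' j h1, grayOut_ge p n a c j h1]
      simp [hc', h2]
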